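/- Let (Ω, ℱ, P) be a probability space, W : Ω → 𝒲 a random variable taking values in a finite set 𝒲, B a measurable event with P(B) > 0, Y : Ω → 𝒴 a random variable taking values in a finite set 𝒴, y ∈ 𝒴 with P(B ∩ {Y = y}) > 0, and ζ a real number with 0 < ζ ≤ 1. Assume that for every w ∈ 𝒲 with P({W = w} ∩ B) > 0 one has P({Y = y} ∣ {W = w} ∩ B) ≥ ζ. Then 1 − max_{w ∈ 𝒲} P({W = w} ∣ B ∩ {Y = y}) ≥ ζ · (1 − max_{w ∈ 𝒲} P({W = w} ∣ B)). -/
import Mathlib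


open MeasureTheory

/-- Conditional probability `P(A ∣ B) = P(A ∩ B) / P(B)` as a real number. -/
noncomputable def condProb {Ω : Type*} [MeasurableSpace Ω] (P : Measure Ω) (A B : Set Ω) : ℝ :=
  (P (A ∩ B)).toReal / (P B).toReal

/-- If every conditional output probability is at least `ζ`, then the a posteriori error
probability `1 - max_w P(W = w ∣ ·)` after observing one more output is at least `ζ` times
the a posteriori error probability before. -/
theorem posterior_error_change_bound {Ω 𝒲 𝒴 : Type*} [MeasurableSpace Ω]
    [MeasurableSpace 𝒲] [MeasurableSingletonClass 𝒲] [Fintype 𝒲] [Nonempty 𝒲]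
    [MeasurableSpace 𝒴] [MeasurableSingletonClass 𝒴] [Fintype 𝒴]
    (P : Measure Ω) [IsProbabilityMeasure P]
    (W : Ω → 𝒲) (hW : Measurable W) (Y : Ω → 𝒴) (hY : Measurable Y)
    (B : Set Ω) (hB : MeasurableSet B) (hPB : 0 < (P B).toReal)
    (y : 𝒴) (hPBy : 0 < (P (B ∩ {ω | Y ω = y})).toReal)
    (ζ : ℝ) (hζ0 : 0 < ζ) (hζ1 : ζ ≤ 1)
    (hmin : ∀ w : 𝒲, 0 < (P ({ω | W ω = w} ∩ B)).toReal →
      ζ ≤ condProb P {ω | Y ω = y} ({ω | W ω = w} ∩ B)) :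
    ζ * (1 - ⨆ w : 𝒲, condProb P {ω | W ω = w} B) ≤
      1 - ⨆ w : 𝒲, condProb P {ω | W ω = w} (B ∩ {ω | Y ω = y}) := by
  classical
  set C : Set Ω := B ∩ {ω | Y ω = y} with hCdef
  have hWm : ∀ w : 𝒲, MeasurableSet {ω | W ω = w} := fun w =>
    hW (measurableSet_singleton w)
  have hYm : MeasurableSet {ω | Y ω = y} := hY (measurableSet_singleton y)
  have hCm : MeasurableSet C := hB.inter hYm
  set p : 𝒲 → ℝ := fun w => (P ({ω | W ω = w} ∩ B)).toReal with hpdef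
  set q : 𝒲 → ℝ := fun w => (P ({ω | W ω = w} ∩ C)).toReal with hqdef
  have hp0 : ∀ w, 0 ≤ p w := fun w => ENNReal.toReal_nonneg
  have hq0 : ∀ w, 0 ≤ q w := fun w => ENNReal.toReal_nonneg
  have hqp : ∀ w, q w ≤ p w := fun w =>
    ENNReal.toReal_mono (measure_ne_top P _)
      (measure_mono (Set.inter_subset_inter_right _ Set.inter_subset_left))
  -- sum of p over all w is P(B)
  have hsum : ∀ (A : Set Ω), MeasurableSet A →
      ∑ w : 𝒲, (P ({ω | W ω = w} ∩ A)).toReal = (P A).toReal := by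
    intro A hA
    have hU : (⋃ w : 𝒲, ({ω | W ω = w} ∩ A)) = A := by
      ext ω; simp
    have hdisj : Pairwise (Function.onFun Disjoint fun w => {ω | W ω = w} ∩ A) := by
      intro a b hab
      refine Set.disjoint_left.2 ?_
      rintro ω ⟨ha, -⟩ ⟨hb, -⟩
      exact hab (ha.symm.trans hb)
    have := measure_iUnion (μ := P) hdisj (fun w => (hWm w).inter hA)
    rw [hU, tsum_fintype] at this
    rw [this, ENNReal.toReal_sum (fun w _ => measure_ne_top P _)]
  have hsum_p : ∑ w : 𝒲, p w = (P B).toReal := hsum B hB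
  have hsum_q : ∑ w : 𝒲, q w = (P C).toReal := hsum C hCm
  -- ζ * p w ≤ q w
  have hζpq : ∀ w, ζ * p w ≤ q w := by
    intro w
    rcases eq_or_lt_of_le (hp0 w) with h | h
    · have hq : q w = 0 := le_antisymm ((hqp w).trans h.symm.le) (hq0 w)
      rw [hq, ← h]; simp
    · have h1 := hmin w h
      have hset : {ω | Y ω = y} ∩ ({ω | W ω = w} ∩ B) = {ω | W ω = w} ∩ C := by
        rw [hCdef]; ext ω; simp; tauto
      rw [condProb, hset] at h1
      calc ζ * p w ≤ q w / p w * p w := by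
            exact mul_le_mul_of_nonneg_right h1 (hp0 w)
        _ = q w := div_mul_cancel₀ _ (ne_of_gt h)
  have hPCB : (P C).toReal ≤ (P B).toReal :=
    ENNReal.toReal_mono (measure_ne_top P _) (measure_mono Set.inter_subset_left)
  have hPC : 0 < (P C).toReal := hPBy
  -- bounded above for ciSup
  have hbddB : BddAbove (Set.range fun w => condProb P {ω | W ω = w} B) :=
    (Set.finite_range _).bddAbove
  -- main pointwise bound
  have key : ∀ w : 𝒲, condProb P {ω | W ω = w} C ≤
      1 - ζ * (1 - ⨆ w : 𝒲, condProb P {ω | W ω = w} B) := by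
    intro w
    have hle : condProb P {ω | W ω = w} B ≤ ⨆ w : 𝒲, condProb P {ω | W ω = w} B :=
      le_ciSup hbddB w
    have hpw : condProb P {ω | W ω = w} B = p w / (P B).toReal := rfl
    have hqw : condProb P {ω | W ω = w} C = q w / (P C).toReal := rfl
    -- sums over erase
    have hep : ∑ v ∈ Finset.univ.erase w, p v = (P B).toReal - p w := by
      have := Finset.sum_erase_add Finset.univ p (Finset.mem_univ w)
      rw [hsum_p] at this; linarith
    have heq : ∑ v ∈ Finset.univ.erase w, q v = (P C).toReal - q w := by
      have := Finset.sum_erase_add Finset.univ q (Finset.mem_univ w)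
      rw [hsum_q] at this; linarith
    have hsum_le : ζ * ((P B).toReal - p w) ≤ (P C).toReal - q w := by
      rw [← hep, ← heq, Finset.mul_sum]
      exact Finset.sum_le_sum fun v _ => hζpq v
    have hnn : 0 ≤ (P B).toReal - p w := by
      have : p w ≤ (P B).toReal :=
        ENNReal.toReal_mono (measure_ne_top P _) (measure_mono Set.inter_subset_right)
      linarith
    -- ζ * (1 - sup) ≤ ζ * (1 - p w / PB) = ζ * (PB - p w)/PB ≤ (PC - q w)/PC = 1 - q w/PC
    have step1 : ζ * (1 - ⨆ w : 𝒲, condProb P {ω | W ω = w} B) ≤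
        ζ * (((P B).toReal - p w) / (P B).toReal) := by
      apply mul_le_mul_of_nonneg_left _ (le_of_lt hζ0)
      rw [sub_div, div_self (ne_of_gt hPB)]
      rw [hpw] at hle; linarith
    have step2 : ζ * (((P B).toReal - p w) / (P B).toReal) ≤
        ((P C).toReal - q w) / (P C).toReal := by
      rw [mul_div_assoc', div_le_div_iff₀ hPB hPC]
      nlinarith [mul_nonneg (mul_nonneg hζ0.le hnn) (sub_nonneg.2 hPCB),
        mul_le_mul_of_nonneg_right hsum_le hPC.le]
    have step3 : ((P C).toReal - q w) / (P C).toReal = 1 - q w / (P C).toReal := by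
      rw [sub_div, div_self (ne_of_gt hPC)]
    rw [hqw]
    linarith [step1, step2.trans_eq step3]
  have hT : (⨆ w : 𝒲, condProb P {ω | W ω = w} C) ≤
      1 - ζ * (1 - ⨆ w : 𝒲, condProb P {ω | W ω = w} B) := ciSup_le key
  linarith
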